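/- Fix u ∈ (u_−, u_+) with u ≠ 0. Then there exists t₀ > 0 such that for all 0 < t < t₀ one has D_t(u) := (bt + ρξu)² + u(t − u)ξ² < 0, and, defining for such t the real number f_t(u) := cos(√(−D_t(u))/2) − ((bt + ρξu)/√(−D_t(u)))·sin(√(−D_t(u))/2), the expansion f_t(u) = f₀(u) + f₁(u)·t + O(t²) holds as t → 0⁺, where f₁(u) := (ρ(ξ + 2bρ)/(4ρ̄²))·cos(ρ̄ξu/2) + ((ξ + 2bρ)/(4ρ̄) − (ξρ + 2b)/(2uξρ̄³))·sin(ρ̄ξu/2). -/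

import Mathlib

open Real

set_option maxHeartbeats 2000000 in
/-- Small-time expansion of `f_t^X(u)`: for fixed `u ∈ (u_−, u_+) \ {0}`, the radicand
`D_t(u) = (bt + ρξu)² + u(t−u)ξ²` is negative for small `t`, and the (real, trigonometric
form of the) function `f_t(u)` admits the expansion `f_t(u) = f₀(u) + f₁(u) t + O(t²)`
as `t → 0⁺`. -/
theorem fX_small_time_expansion
    (ξ b ρ : ℝ) (hξ : 0 < ξ) (hb : b < 0) (hρ : ρ ∈ Set.Ioo (-1 : ℝ) 1)
    (ρbar : ℝ) (hρbar : ρbar = Real.sqrt (1 - ρ ^ 2))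
    (um up : ℝ)
    (hum : um = if ρ < 0 then 2 / (ξ * ρbar) * Real.arctan (ρbar / ρ)
        else if ρ = 0 then -π / ξ
        else 2 / (ξ * ρbar) * (Real.arctan (ρbar / ρ) - π))
    (hup : up = if 0 < ρ then 2 / (ξ * ρbar) * Real.arctan (ρbar / ρ)
        else if ρ = 0 then π / ξ
        else 2 / (ξ * ρbar) * (Real.arctan (ρbar / ρ) + π))
    (u : ℝ) (hu : u ∈ Set.Ioo um up) (hu0 : u ≠ 0)
    (D : ℝ → ℝ) (hD : ∀ t, D t = (b * t + ρ * ξ * u) ^ 2 + u * (t - u) * ξ ^ 2)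
    (f : ℝ → ℝ)
    (hf : ∀ t, f t = Real.cos (Real.sqrt (-D t) / 2)
        - (b * t + ρ * ξ * u) / Real.sqrt (-D t) * Real.sin (Real.sqrt (-D t) / 2))
    (f₀ f₁ : ℝ)
    (hf₀ : f₀ = Real.cos (ρbar * ξ * u / 2) - ρ / ρbar * Real.sin (ρbar * ξ * u / 2))
    (hf₁ : f₁ = ρ * (ξ + 2 * b * ρ) / (4 * ρbar ^ 2) * Real.cos (ρbar * ξ * u / 2)
        + ((ξ + 2 * b * ρ) / (4 * ρbar) - (ξ * ρ + 2 * b) / (2 * u * ξ * ρbar ^ 3))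
          * Real.sin (ρbar * ξ * u / 2)) :
    ∃ t₀ > (0 : ℝ), ∃ C > (0 : ℝ), ∀ t, 0 < t → t < t₀ →
      D t < 0 ∧ |f t - f₀ - f₁ * t| ≤ C * t ^ 2 := by
  clear hum hup hu hb
  obtain ⟨hρ1, hρ2⟩ := hρ
  have h1ρ : 0 < 1 - ρ ^ 2 := by nlinarith
  have hρb : 0 < ρbar := hρbar ▸ Real.sqrt_pos.mpr h1ρ
  have hρbsq : ρbar ^ 2 = 1 - ρ ^ 2 := by rw [hρbar]; exact Real.sq_sqrt h1ρ.le
  have Deq : D = fun t => (b * t + ρ * ξ * u) ^ 2 + u * (t - u) * ξ ^ 2 := funext hD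
  have Feq : f = fun t => Real.cos (Real.sqrt (-D t) / 2)
      - (b * t + ρ * ξ * u) / Real.sqrt (-D t) * Real.sin (Real.sqrt (-D t) / 2) := funext hf
  have hu2 : 0 < u ^ 2 := by positivity
  -- value of -D 0
  have hD0 : -D 0 = (ξ * u * ρbar) ^ 2 := by
    rw [hD]; linear_combination (-(ξ ^ 2) * u ^ 2) * hρbsq
  have hD0neg : D 0 < 0 := by nlinarith [hD0, sq_nonneg (ξ * u * ρbar), mul_pos (mul_pos hξ hρb) hu2]
  -- negativity of D on a neighborhood
  have hDcont : Continuous D := by rw [Deq]; fun_prop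
  have hmem : D ⁻¹' Set.Iio 0 ∈ nhds (0 : ℝ) :=
    hDcont.continuousAt.preimage_mem_nhds (Iio_mem_nhds hD0neg)
  obtain ⟨ε, hε, hball⟩ := Metric.mem_nhds_iff.mp hmem
  set δ : ℝ := ε / 2 with hδdef
  have hδ : 0 < δ := by positivity
  have hDneg : ∀ t ∈ Set.Icc (0:ℝ) δ, D t < 0 := by
    intro t ht
    have : t ∈ Metric.ball (0:ℝ) ε := by
      simp only [Metric.mem_ball, Real.dist_eq, sub_zero]
      rw [abs_of_nonneg ht.1]
      exact lt_of_le_of_lt ht.2 (by linarith)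
    exact hball this
  set s : Set ℝ := Set.Icc 0 δ with hsdef
  have husd : UniqueDiffOn ℝ s := uniqueDiffOn_Icc hδ
  have h0s : (0:ℝ) ∈ s := ⟨le_rfl, hδ.le⟩
  -- smoothness
  have hfc : ContDiffOn ℝ 2 f s := by
    rw [Feq]
    intro t ht
    have hne : -D t ≠ 0 := ne_of_gt (by linarith [hDneg t ht])
    have hDc : ContDiffAt ℝ 2 (fun t => -D t) t := by
      rw [Deq]; fun_prop
    have hsq : ContDiffAt ℝ 2 (fun t => Real.sqrt (-D t)) t :=
      (Real.contDiffAt_sqrt hne).comp t hDc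
    have hsqne : Real.sqrt (-D t) ≠ 0 :=
      ne_of_gt (Real.sqrt_pos.mpr (by linarith [hDneg t ht]))
    exact (((hsq.div_const 2).cos).sub
      ((ContDiffAt.div (by fun_prop) hsq hsqne).mul ((hsq.div_const 2).sin))).contDiffWithinAt
  -- derivatives at 0
  set R : ℝ := Real.sqrt (-D 0) with hRdef
  have hRpos : 0 < R := Real.sqrt_pos.mpr (by linarith)
  have hRne : R ≠ 0 := ne_of_gt hRpos
  set A : ℝ := -(2 * (ρ * ξ * u) * b + u * ξ ^ 2) with hAdef
  have hp : HasDerivAt (fun t : ℝ => b * t + ρ * ξ * u) b 0 := by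
    simpa using ((hasDerivAt_id (0:ℝ)).const_mul b).add_const (ρ * ξ * u)
  have hg : HasDerivAt (fun t => -D t) A 0 := by
    rw [Deq]
    have hq : HasDerivAt (fun t : ℝ => u * (t - u) * ξ ^ 2) (u * ξ ^ 2) 0 := by
      simpa using (((hasDerivAt_id (0:ℝ)).sub_const u).const_mul u).mul_const (ξ ^ 2)
    have := ((hp.fun_pow 2).fun_add hq).fun_neg
    refine this.congr_deriv ?_
    simp [hAdef]
  have hDne0 : -D 0 ≠ 0 := by rw [hD0]; positivity
  have hr : HasDerivAt (fun t => Real.sqrt (-D t)) (A / (2 * R)) 0 := hg.sqrt hDne0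
  have hcos : HasDerivAt (fun t => Real.cos (Real.sqrt (-D t) / 2))
      (-Real.sin (R / 2) * (A / (2 * R) / 2)) 0 := (hr.div_const 2).cos
  have hsin : HasDerivAt (fun t => Real.sin (Real.sqrt (-D t) / 2))
      (Real.cos (R / 2) * (A / (2 * R) / 2)) 0 := (hr.div_const 2).sin
  have hdiv : HasDerivAt (fun t => (b * t + ρ * ξ * u) / Real.sqrt (-D t))
      ((b * R - (b * 0 + ρ * ξ * u) * (A / (2 * R))) / R ^ 2) 0 := hp.div hr hRne
  have hF : HasDerivAt f
      (-Real.sin (R / 2) * (A / (2 * R) / 2)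
        - ((b * R - (b * 0 + ρ * ξ * u) * (A / (2 * R))) / R ^ 2 * Real.sin (R / 2)
          + (b * 0 + ρ * ξ * u) / R * (Real.cos (R / 2) * (A / (2 * R) / 2)))) 0 := by
    rw [Feq]
    exact hcos.sub (hdiv.mul hsin)
  -- identify R with ± ρbar ξ u and compute f 0 and f' 0
  have hRcase : R = ρbar * ξ * u ∨ R = -(ρbar * ξ * u) := by
    rcases lt_or_gt_of_ne hu0 with h | h
    · right
      rw [hRdef, hD0, show (ξ * u * ρbar) ^ 2 = (-(ρbar * ξ * u)) ^ 2 by ring]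
      exact Real.sqrt_sq (by nlinarith [mul_pos (mul_pos hρb hξ) (neg_pos.mpr h)])
    · left
      rw [hRdef, hD0, show (ξ * u * ρbar) ^ 2 = (ρbar * ξ * u) ^ 2 by ring]
      exact Real.sqrt_sq (by positivity)
  have hf0val : f 0 = f₀ := by
    rw [hf, hf₀]
    rcases hRcase with h | h <;> rw [hRdef] at h <;> rw [h] <;>
      [skip; rw [neg_div, Real.sin_neg, Real.cos_neg]] <;>
      have h1 : ρbar * ξ * u ≠ 0 := by positivity
    · field_simp
      ring
    · field_simp
      ring
  have hF1 : HasDerivAt f f₁ 0 := by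
    convert hF using 1
    rw [hf₁]
    rcases hRcase with h | h <;> rw [h] <;>
      [skip; rw [neg_div, Real.sin_neg, Real.cos_neg]]
    · field_simp
      linear_combination (16 * ξ ^ 2 * u ^ 2 * b * Real.sin (ξ * ρbar * u / 2)) * hρbsq
    · field_simp
      linear_combination (16 * ξ ^ 2 * u ^ 2 * b * Real.sin (ξ * ρbar * u / 2)) * hρbsq
  -- Taylor expansion with remainder
  have hdW : derivWithin f s 0 = f₁ := hF1.hasDerivWithinAt.derivWithin (husd 0 h0s)
  have hfc' : ContDiffOn ℝ ((1 : ℕ) + 1) f (Set.Icc 0 δ) := by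
    rw [← hsdef]; exact_mod_cast hfc
  obtain ⟨M, hM⟩ := IsCompact.exists_bound_of_continuousOn isCompact_Icc
      (hfc.continuousOn_iteratedDerivWithin (by exact_mod_cast le_refl (2:ℕ∞)) husd)
  have hb2 : ∀ y ∈ Set.Icc 0 δ, ‖iteratedDerivWithin (1 + 1) f (Set.Icc 0 δ) y‖ ≤ |M| := by
    intro y hy
    rw [← hsdef]
    exact (hM y (hsdef ▸ hy)).trans (le_abs_self M)
  refine ⟨δ, hδ, |M| + 1, by positivity, ?_⟩
  intro t ht0 htδ
  have hts : t ∈ s := ⟨ht0.le, htδ.le⟩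
  refine ⟨hDneg t hts, ?_⟩
  have htay := taylor_mean_remainder_bound (n := 1) hδ.le hfc' (hsdef ▸ hts) hb2
  have hTay : taylorWithinEval f 1 (Set.Icc 0 δ) 0 t = f₀ + f₁ * t := by
    rw [taylor_within_apply]
    rw [Finset.sum_range_succ, Finset.sum_range_succ, Finset.sum_range_zero]
    rw [← hsdef, iteratedDerivWithin_one, hdW, iteratedDerivWithin_zero, hf0val]
    simp
    ring
  rw [hTay] at htay
  have h1 : |f t - f₀ - f₁ * t| = ‖f t - (f₀ + f₁ * t)‖ := by
    rw [Real.norm_eq_abs]; ring_nf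
  rw [h1]
  refine htay.trans ?_
  have ht2 : 0 ≤ t ^ 2 := sq_nonneg t
  have : (t - 0) ^ (1 + 1) = t ^ 2 := by ring
  rw [this]
  simp only [Nat.factorial_one, Nat.cast_one, div_one]
  nlinarith [abs_nonneg M]
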